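/- Define E_P(r) = 1/(|P|+1) + (|P|/(2(|P|+1)))·((1-1/|P|)^{-r} + (1+1/|P|)^{-r}) for a real parameter r. If r is large and |P| > r^{2/3}, then ln E_P(r) = ln cosh(r/|P|) + O(r/|P|²). -/

import Mathlib

lemma aux_log_one_sub {u : ℝ} (hu0 : 0 < u) (hu5 : u ≤ 1/5) :
    -(u + u^2) ≤ Real.log (1 - u) := by
  have h1u : (0:ℝ) < 1 - u := by linarith
  rw [Real.le_log_iff_exp_le h1u]
  obtain ⟨t, ht⟩ : ∃ t : ℝ, t = u + u^2 := ⟨_, rfl⟩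
  rw [show -(u + u^2) = -t by rw [ht]]
  have ht0 : (0:ℝ) ≤ t := by rw [ht]; positivity
  obtain ⟨v, hv⟩ : ∃ v : ℝ, v = Real.exp (t/2) := ⟨_, rfl⟩
  have hlb : t/2 + 1 ≤ v := by rw [hv]; exact Real.add_one_le_exp _
  have h1t : (0:ℝ) ≤ 1 + t/2 := by linarith
  have hhalf : Real.exp t = v * v := by rw [hv, ← Real.exp_add]; ring_nf
  have hcube3 : (0:ℝ) ≤ (1 - u) * (1 + u)^2 - 4*u := by nlinarith
  have hkey0 : (0:ℝ) ≤ u^2 * ((1 - u) * (1 + u)^2 - 4*u) :=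
    mul_nonneg (sq_nonneg _) hcube3
  have hpoly : 1 ≤ (1 - u) * ((1 + t/2) * (1 + t/2)) := by
    rw [ht]; nlinarith [hkey0]
  have hvsq : (1 + t/2) * (1 + t/2) ≤ v * v :=
    mul_le_mul (by linarith) (by linarith) h1t (by linarith)
  have hx1 : 1 ≤ (1 - u) * Real.exp t := by
    rw [hhalf]
    calc (1:ℝ) ≤ (1 - u) * ((1 + t/2) * (1 + t/2)) := hpoly
      _ ≤ (1 - u) * (v * v) := mul_le_mul_of_nonneg_left hvsq (le_of_lt h1u)
  have hmul : Real.exp (-t) * Real.exp t = 1 := by rw [← Real.exp_add]; simp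
  nlinarith [Real.exp_pos t, hx1, hmul]

lemma aux_log_one_add {u : ℝ} (hu0 : 0 < u) :
    u - u^2 ≤ Real.log (1 + u) := by
  have h2u : (0:ℝ) < 1 + u := by linarith
  rw [Real.le_log_iff_exp_le h2u]
  have h1 : (1 + u) * (1 + (u^2 - u)) ≤ (1 + u) * Real.exp (u^2 - u) :=
    mul_le_mul_of_nonneg_left (by linarith [Real.add_one_le_exp (u^2 - u)]) h2u.le
  have hmul : Real.exp (u - u^2) * Real.exp (u^2 - u) = 1 := by
    rw [← Real.exp_add]; norm_num
  nlinarith [Real.exp_pos (u^2 - u), h1, hmul, mul_pos hu0 (mul_pos hu0 hu0)]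

lemma aux_exp_neg_two {s : ℝ} (hs0 : 0 ≤ s) (hs2 : s ≤ 1/2) :
    Real.exp (-(2*s)) ≤ 1 - s := by
  have h1 : (1 - s) * (1 + 2*s) ≤ (1 - s) * Real.exp (2*s) :=
    mul_le_mul_of_nonneg_left (by linarith [Real.add_one_le_exp (2*s)]) (by linarith)
  have hmul : Real.exp (-(2*s)) * Real.exp (2*s) = 1 := by rw [← Real.exp_add]; simp
  nlinarith [Real.exp_pos (2*s), h1, hmul,
    mul_nonneg hs0 (by linarith : (0:ℝ) ≤ 1 - 2*s)]

lemma aux_sum_two {y : ℝ} : 2 ≤ Real.exp y + Real.exp (-y) := by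
  have h := Real.exp_pos y
  have h2 := Real.exp_pos (-y)
  have hm : Real.exp y * Real.exp (-y) = 1 := by rw [← Real.exp_add]; simp
  nlinarith [sq_nonneg (Real.exp y - Real.exp (-y))]

/-- The random Euler factor at a real argument `r`. -/
noncomputable def Ep (p r : ℝ) : ℝ :=
  1 / (p + 1) + p / (2 * (p + 1)) * ((1 - 1 / p) ^ (-r) + (1 + 1 / p) ^ (-r))

set_option maxHeartbeats 1000000 in
/-- If `r` is large and `|P| > r^{2/3}` then `ln E_P(r) = ln cosh(r/|P|) + O(r/|P|²)`. -/
theorem log_Ep_large_p :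
    ∃ C r0 : ℝ, 0 < C ∧ ∀ r : ℝ, r0 ≤ r → ∀ p : ℝ, 5 ≤ p → r ^ ((2 : ℝ) / 3) < p →
      |Real.log (Ep p r) - Real.log (Real.cosh (r / p))| ≤ C * r / p ^ 2 := by
  refine ⟨2, 8, by norm_num, ?_⟩
  intro r hr p hp5 hpr
  have hr0 : (0:ℝ) < r := by linarith
  have hp0 : (0:ℝ) < p := by linarith
  have hp1 : (0:ℝ) < p + 1 := by linarith
  have hu0 : (0:ℝ) < 1/p := by positivity
  have hu5 : 1/p ≤ 1/5 := by
    rw [div_le_div_iff₀ hp0 (by norm_num)]; linarith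
  have h1u : (0:ℝ) < 1 - 1/p := by linarith
  have h2u : (0:ℝ) < 1 + 1/p := by linarith
  -- abbreviations
  set x : ℝ := r / p with hxdef
  set s : ℝ := r / p ^ 2 with hsdef
  have hx0 : 0 ≤ x := by rw [hxdef]; positivity
  have hs0 : 0 ≤ s := by rw [hsdef]; positivity
  have hxu : x = r * (1/p) := by rw [hxdef]; ring
  have hsu : s = r * (1/p)^2 := by rw [hsdef]; ring
  -- s ≤ 1/2
  have hcube : (2:ℝ) ≤ r ^ ((1:ℝ)/3) := by
    have h8 : (8:ℝ) ^ ((1:ℝ)/3) = 2 := by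
      rw [show (8:ℝ) = 2^(3:ℕ) by norm_num, ← Real.rpow_natCast 2 3,
        ← Real.rpow_mul (by norm_num : (0:ℝ) ≤ 2)]
      norm_num
    calc (2:ℝ) = 8 ^ ((1:ℝ)/3) := h8.symm
      _ ≤ r ^ ((1:ℝ)/3) := Real.rpow_le_rpow (by norm_num) hr (by norm_num)
  have hsq : r ^ ((4:ℝ)/3) < p^2 := by
    have h1 : (r ^ ((2:ℝ)/3))^2 = r ^ ((4:ℝ)/3) := by
      rw [← Real.rpow_natCast (r ^ ((2:ℝ)/3)) 2, ← Real.rpow_mul hr0.le]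
      norm_num
    have h2 : (0:ℝ) ≤ r ^ ((2:ℝ)/3) := Real.rpow_nonneg hr0.le _
    nlinarith [hpr]
  have h43 : r ^ ((4:ℝ)/3) = r * r ^ ((1:ℝ)/3) := by
    rw [show (4:ℝ)/3 = 1 + 1/3 by norm_num, Real.rpow_add hr0, Real.rpow_one]
  have h2r : 2*r < p^2 := by nlinarith
  have hs2 : s ≤ 1/2 := by
    rw [hsdef, div_le_div_iff₀ (by positivity) (by norm_num)]; nlinarith
  clear_value x s
  -- logarithm bounds, u = 1/p
  have hl1 : Real.log (1 - 1/p) ≤ -(1/p) := by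
    have := Real.log_le_sub_one_of_pos h1u; linarith
  have hl3 : Real.log (1 + 1/p) ≤ 1/p := by
    have := Real.log_le_sub_one_of_pos h2u; linarith
  have hl2 : -(1/p + (1/p)^2) ≤ Real.log (1 - 1/p) := aux_log_one_sub hu0 hu5
  have hl4 : 1/p - (1/p)^2 ≤ Real.log (1 + 1/p) := aux_log_one_add hu0
  -- rpow as exp
  have hAeq : (1 - 1/p) ^ (-r) = Real.exp (Real.log (1 - 1/p) * (-r)) :=
    Real.rpow_def_of_pos h1u (-r)
  have hBeq : (1 + 1/p) ^ (-r) = Real.exp (Real.log (1 + 1/p) * (-r)) :=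
    Real.rpow_def_of_pos h2u (-r)
  have hA1 : Real.exp x ≤ (1 - 1/p) ^ (-r) := by
    rw [hAeq]
    apply Real.exp_le_exp.mpr
    rw [hxu]
    linarith [mul_le_mul_of_nonneg_left hl1 hr0.le]
  have hA2 : (1 - 1/p) ^ (-r) ≤ Real.exp (x + s) := by
    rw [hAeq]
    apply Real.exp_le_exp.mpr
    rw [hxu, hsu]
    linarith [mul_le_mul_of_nonneg_left hl2 hr0.le]
  have hB1 : Real.exp (-x) ≤ (1 + 1/p) ^ (-r) := by
    rw [hBeq]
    apply Real.exp_le_exp.mpr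
    rw [hxu]
    linarith [mul_le_mul_of_nonneg_left hl3 hr0.le]
  have hB2 : (1 + 1/p) ^ (-r) ≤ Real.exp (-x + s) := by
    rw [hBeq]
    apply Real.exp_le_exp.mpr
    rw [hxu, hsu]
    linarith [mul_le_mul_of_nonneg_left hl4 hr0.le]
  -- exp facts
  have hE1lb : 1 + x ≤ Real.exp x := by linarith [Real.add_one_le_exp x]
  have hE2lb : 1 - x ≤ Real.exp (-x) := by linarith [Real.add_one_le_exp (-x)]
  set E1 : ℝ := Real.exp x with hE1def
  set E2 : ℝ := Real.exp (-x) with hE2def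
  have hE1pos : 0 < E1 := by rw [hE1def]; exact Real.exp_pos _
  have hE2pos : 0 < E2 := by rw [hE2def]; exact Real.exp_pos _
  have hE12 : E1 * E2 = 1 := by rw [hE1def, hE2def, ← Real.exp_add]; simp
  have hcosh : Real.cosh x = (E1 + E2) / 2 := by
    rw [hE1def, hE2def]; exact Real.cosh_eq x
  have hEs : Real.exp (x + s) = E1 * Real.exp s := by
    rw [hE1def, ← Real.exp_add]
  have hEs' : Real.exp (-x + s) = E2 * Real.exp s := by
    rw [hE2def, ← Real.exp_add]
  clear_value E1 E2
  have hsum2 : 2 ≤ E1 + E2 := by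
    rw [hE1def, hE2def]; exact aux_sum_two
  have hEs1 : 1 ≤ Real.exp s := by
    rw [show (1:ℝ) = Real.exp 0 by simp]
    exact Real.exp_le_exp.mpr hs0
  -- Upper bound : Ep p r ≤ exp s * cosh x
  have hupper : Ep p r ≤ Real.exp s * Real.cosh x := by
    unfold Ep
    rw [hcosh]
    have hABle : (1 - 1/p) ^ (-r) + (1 + 1/p) ^ (-r) ≤ Real.exp s * (E1 + E2) := by
      have h1 := hA2.trans_eq hEs
      have h2 := hB2.trans_eq hEs'
      linarith [h1, h2]
    have hM2 : 2 ≤ Real.exp s * (E1 + E2) := by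
      have h12 : (1:ℝ) * 2 ≤ Real.exp s * (E1 + E2) :=
        mul_le_mul hEs1 hsum2 (by norm_num) (by linarith)
      linarith
    have hkey : 2 + p * (Real.exp s * (E1 + E2)) ≤ Real.exp s * (E1 + E2) * (p + 1) := by
      linarith [hM2]
    have hc0 : 0 ≤ p / (2 * (p + 1)) := by positivity
    have hstep : 1/(p+1) + p/(2*(p+1)) * (Real.exp s * (E1 + E2))
        ≤ Real.exp s * ((E1 + E2) / 2) := by
      have hdiff : Real.exp s * ((E1 + E2) / 2)
          - (1/(p+1) + p/(2*(p+1)) * (Real.exp s * (E1 + E2)))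
          = (Real.exp s * (E1 + E2) * (p + 1) - (2 + p * (Real.exp s * (E1 + E2))))
            / (2 * (p + 1)) := by
        field_simp
      have := div_nonneg
        (by linarith : (0:ℝ) ≤ Real.exp s * (E1 + E2) * (p + 1)
          - (2 + p * (Real.exp s * (E1 + E2))))
        (by linarith : (0:ℝ) ≤ 2 * (p + 1))
      linarith
    calc 1/(p+1) + p/(2*(p+1)) * ((1 - 1/p) ^ (-r) + (1 + 1/p) ^ (-r))
        ≤ 1/(p+1) + p/(2*(p+1)) * (Real.exp s * (E1 + E2)) := by
          have := mul_le_mul_of_nonneg_left hABle hc0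
          linarith
      _ ≤ Real.exp s * ((E1 + E2) / 2) := hstep
  -- Lower bound : exp (-(2*s)) * cosh x ≤ Ep p r
  have hexp2s : Real.exp (-(2*s)) ≤ 1 - s := aux_exp_neg_two hs0 hs2
  have hkeyL : (1 - s) * (E1 + E2) * (p + 1) ≤ 2 + p * (E1 + E2) := by
    rcases le_or_gt (1 - s * (p + 1)) 0 with hcase | hcase
    · have hprod : 0 ≤ (E1 + E2) * (s * (p + 1) - 1) :=
        mul_nonneg (by linarith) (by linarith)
      linarith [hprod]
    · -- s * (p+1) < 1, hence r < p and x < 1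
      have hr2 : r * (p + 1) < p ^ 2 := by
        have h' : r * (p + 1) / p ^ 2 < 1 := by
          rw [show r * (p + 1) / p ^ 2 = r / p ^ 2 * (p + 1) by ring, ← hsdef]
          linarith
        exact (div_lt_one (by positivity)).mp h'
      have hrp : r < p := by
        have h2 : r * (p + 1) < p * (p + 1) := by linarith [hr2, hp0.le]
        exact (mul_lt_mul_iff_of_pos_right hp1).mp h2
      have hx1 : x < 1 := by rw [hxdef]; exact (div_lt_one hp0).mpr hrp
      have hE1b : E1 * (1 - x) ≤ 1 := by
        calc E1 * (1 - x) ≤ E1 * E2 := mul_le_mul_of_nonneg_left hE2lb hE1pos.le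
          _ = 1 := hE12
      have hE2b : E2 * (1 + x) ≤ 1 := by
        calc E2 * (1 + x) ≤ E2 * E1 := mul_le_mul_of_nonneg_left hE1lb hE2pos.le
          _ = 1 := by rw [mul_comm]; exact hE12
      have hxsq : x^2 ≤ s * (p + 1) := by
        rw [hxdef, hsdef, show (r/p)^2 = r^2/p^2 by ring,
          show r / p ^ 2 * (p + 1) = r * (p + 1) / p ^ 2 by ring]
        refine (div_le_div_iff_of_pos_right (by positivity)).mpr ?_
        rw [pow_two]
        exact mul_le_mul_of_nonneg_left (by linarith) hr0.le
      have h1' := mul_le_mul_of_nonneg_right hE1b (by linarith : (0:ℝ) ≤ 1 + x)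
      have h2' := mul_le_mul_of_nonneg_right hE2b (by linarith : (0:ℝ) ≤ 1 - x)
      have h3' := mul_le_mul_of_nonneg_left hxsq (by linarith : (0:ℝ) ≤ E1 + E2)
      linarith [h1', h2', h3']
  have hlower : Real.exp (-(2*s)) * Real.cosh x ≤ Ep p r := by
    unfold Ep
    rw [hcosh]
    have hc0 : 0 ≤ p / (2 * (p + 1)) := by positivity
    have hstep : (1 - s) * ((E1 + E2) / 2) ≤ 1/(p+1) + p/(2*(p+1)) * (E1 + E2) := by
      have hdiff : 1/(p+1) + p/(2*(p+1)) * (E1 + E2) - (1 - s) * ((E1 + E2) / 2)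
          = (2 + p * (E1 + E2) - (1 - s) * (E1 + E2) * (p + 1)) / (2 * (p + 1)) := by
        field_simp
      have := div_nonneg
        (by linarith : (0:ℝ) ≤ 2 + p * (E1 + E2) - (1 - s) * (E1 + E2) * (p + 1))
        (by linarith : (0:ℝ) ≤ 2 * (p + 1))
      linarith
    calc Real.exp (-(2*s)) * ((E1 + E2) / 2) ≤ (1 - s) * ((E1 + E2) / 2) := by
          apply mul_le_mul_of_nonneg_right hexp2s
          positivity
      _ ≤ 1/(p+1) + p/(2*(p+1)) * (E1 + E2) := hstep
      _ ≤ 1/(p+1) + p/(2*(p+1)) * ((1 - 1/p) ^ (-r) + (1 + 1/p) ^ (-r)) := by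
          have := mul_le_mul_of_nonneg_left (add_le_add hA1 hB1) hc0
          linarith
  -- take logarithms
  have hcoshpos : 0 < Real.cosh x := Real.cosh_pos x
  have hEppos : 0 < Ep p r :=
    lt_of_lt_of_le (mul_pos (Real.exp_pos _) hcoshpos) hlower
  have hlog1 : Real.log (Ep p r) ≤ s + Real.log (Real.cosh x) := by
    have h := Real.log_le_log hEppos hupper
    rwa [Real.log_mul (Real.exp_ne_zero _) (ne_of_gt hcoshpos), Real.log_exp] at h
  have hlog2 : -(2*s) + Real.log (Real.cosh x) ≤ Real.log (Ep p r) := by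
    have h := Real.log_le_log (mul_pos (Real.exp_pos _) hcoshpos) hlower
    rwa [Real.log_mul (Real.exp_ne_zero _) (ne_of_gt hcoshpos), Real.log_exp] at h
  have hgoal : 2 * r / p ^ 2 = 2 * s := by rw [hsdef]; ring
  rw [abs_le, hgoal]
  constructor <;> linarith
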